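/- Let X be a finite set, P a probability distribution on X with full support, ρ > 0, α = 1/(1+ρ), and Z = ∑_x P(x)^α. Define L(x) = ⌈log(Z / P(x)^α)⌉ (ceiling of the base-2 logarithm). Then L satisfies the Kraft inequality ∑_x 2^{-L(x)} ≤ 1, and H_α(P) ≤ (1/ρ)·log(∑_x P(x)·2^{ρ·L(x)}) ≤ H_α(P) + 1. -/

import Mathlib

open Real Finset

theorem stmt7 {X : Type*} [Fintype X]
    (P : X → ℝ) (hP : ∀ x, 0 < P x) (hPsum : ∑ x, P x = 1)
    (ρ : ℝ) (hρ : 0 < ρ) (α : ℝ) (hα : α = 1 / (1 + ρ))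
    (Z : ℝ) (hZ : Z = ∑ x, P x ^ α)
    (L : X → ℤ) (hL : ∀ x, L x = ⌈Real.logb 2 (Z / P x ^ α)⌉) :
    (∑ x, (2 : ℝ) ^ (-(L x : ℝ)) ≤ 1) ∧
    (1 / (1 - α)) * Real.logb 2 (∑ x, P x ^ α) ≤
      (1 / ρ) * Real.logb 2 (∑ x, P x * (2 : ℝ) ^ (ρ * (L x : ℝ))) ∧
    (1 / ρ) * Real.logb 2 (∑ x, P x * (2 : ℝ) ^ (ρ * (L x : ℝ))) ≤
      (1 / (1 - α)) * Real.logb 2 (∑ x, P x ^ α) + 1 := by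
  have h1ρ : (0:ℝ) < 1 + ρ := by linarith
  have hα0 : 0 < α := by rw [hα]; positivity
  have hα1 : α < 1 := by rw [hα, div_lt_one h1ρ]; linarith
  have hαρ : α * ρ = 1 - α := by
    rw [hα]; field_simp; ring
  have hne : (Finset.univ : Finset X).Nonempty := by
    by_contra h
    rw [Finset.not_nonempty_iff_eq_empty] at h
    rw [show (∑ x, P x) = ∑ x ∈ (Finset.univ : Finset X), P x from rfl, h,
      Finset.sum_empty] at hPsum
    norm_num at hPsum
  have hPα : ∀ x, 0 < P x ^ α := fun x => Real.rpow_pos_of_pos (hP x) α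
  have hZpos : 0 < Z := by
    rw [hZ]; exact Finset.sum_pos (fun x _ => hPα x) hne
  have hZge : ∀ x, P x ^ α ≤ Z := by
    intro x
    rw [hZ]
    exact Finset.single_le_sum (fun i _ => (hPα i).le) (Finset.mem_univ x)
  have hratio : ∀ x, 0 < Z / P x ^ α := fun x => div_pos hZpos (hPα x)
  have hLlb : ∀ x, Real.logb 2 (Z / P x ^ α) ≤ (L x : ℝ) := by
    intro x; rw [hL x]; exact Int.le_ceil _
  have hLub : ∀ x, (L x : ℝ) < Real.logb 2 (Z / P x ^ α) + 1 := by
    intro x; rw [hL x]; exact Int.ceil_lt_add_one _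
  have h2pos : (0:ℝ) < 2 := by norm_num
  have h2ne1 : (2:ℝ) ≠ 1 := by norm_num
  -- Kraft
  have kraft : ∑ x, (2 : ℝ) ^ (-(L x : ℝ)) ≤ 1 := by
    have hterm : ∀ x, (2 : ℝ) ^ (-(L x : ℝ)) ≤ P x ^ α / Z := by
      intro x
      have h1 : (2 : ℝ) ^ (-(L x : ℝ)) ≤ (2:ℝ) ^ (-Real.logb 2 (Z / P x ^ α)) :=
        Real.rpow_le_rpow_of_exponent_le (by norm_num) (neg_le_neg (hLlb x))
      have h2 : (2:ℝ) ^ (-Real.logb 2 (Z / P x ^ α)) = P x ^ α / Z := by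
        rw [Real.rpow_neg (by norm_num), Real.rpow_logb h2pos h2ne1 (hratio x), inv_div]
      linarith [h1, h2 ▸ h1]
    calc ∑ x, (2 : ℝ) ^ (-(L x : ℝ)) ≤ ∑ x, P x ^ α / Z :=
          Finset.sum_le_sum (fun x _ => hterm x)
      _ = (∑ x, P x ^ α) / Z := by rw [Finset.sum_div]
      _ = 1 := by rw [← hZ, div_self hZpos.ne']
  -- key termwise identity: P x * (Z / P x ^ α) ^ ρ = Z ^ ρ * P x ^ α
  have hkey : ∀ x, P x * (Z / P x ^ α) ^ ρ = Z ^ ρ * P x ^ α := by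
    intro x
    rw [Real.div_rpow hZpos.le (hPα x).le, ← Real.rpow_mul (hP x).le, hαρ,
      Real.rpow_sub (hP x), Real.rpow_one]
    field_simp
    rw [mul_comm (P x), mul_div_assoc, div_self (hP x).ne', mul_one]
  have hSpos : 0 < ∑ x, P x * (2 : ℝ) ^ (ρ * (L x : ℝ)) := by
    apply Finset.sum_pos (fun x _ => ?_) hne
    exact mul_pos (hP x) (Real.rpow_pos_of_pos h2pos _)
  have hSlb : Z ^ (ρ + 1) ≤ ∑ x, P x * (2 : ℝ) ^ (ρ * (L x : ℝ)) := by
    have hterm : ∀ x, Z ^ ρ * P x ^ α ≤ P x * (2 : ℝ) ^ (ρ * (L x : ℝ)) := by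
      intro x
      have h1 : (Z / P x ^ α) ^ ρ ≤ (2:ℝ) ^ (ρ * (L x : ℝ)) := by
        rw [show (Z / P x ^ α) ^ ρ = (2:ℝ) ^ (ρ * Real.logb 2 (Z / P x ^ α)) by
          rw [mul_comm, Real.rpow_mul h2pos.le, Real.rpow_logb h2pos h2ne1 (hratio x)]]
        exact Real.rpow_le_rpow_of_exponent_le (by norm_num)
          (mul_le_mul_of_nonneg_left (hLlb x) hρ.le)
      calc Z ^ ρ * P x ^ α = P x * (Z / P x ^ α) ^ ρ := (hkey x).symm
        _ ≤ P x * (2:ℝ) ^ (ρ * (L x : ℝ)) := mul_le_mul_of_nonneg_left h1 (hP x).le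
    calc Z ^ (ρ + 1) = Z ^ ρ * Z := by rw [Real.rpow_add hZpos, Real.rpow_one]
      _ = Z ^ ρ * ∑ x, P x ^ α := by rw [← hZ]
      _ = ∑ x, Z ^ ρ * P x ^ α := by rw [Finset.mul_sum]
      _ ≤ _ := Finset.sum_le_sum (fun x _ => hterm x)
  have hSub : (∑ x, P x * (2 : ℝ) ^ (ρ * (L x : ℝ))) ≤ 2 ^ ρ * Z ^ (ρ + 1) := by
    have hterm : ∀ x, P x * (2 : ℝ) ^ (ρ * (L x : ℝ)) ≤ 2 ^ ρ * (Z ^ ρ * P x ^ α) := by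
      intro x
      have h1 : (2:ℝ) ^ (ρ * (L x : ℝ)) ≤ 2 ^ ρ * (Z / P x ^ α) ^ ρ := by
        rw [show (Z / P x ^ α) ^ ρ = (2:ℝ) ^ (ρ * Real.logb 2 (Z / P x ^ α)) by
          rw [mul_comm, Real.rpow_mul h2pos.le, Real.rpow_logb h2pos h2ne1 (hratio x)]]
        rw [← Real.rpow_add h2pos]
        apply Real.rpow_le_rpow_of_exponent_le (by norm_num)
        nlinarith [hLub x]
      calc P x * (2 : ℝ) ^ (ρ * (L x : ℝ)) ≤ P x * (2 ^ ρ * (Z / P x ^ α) ^ ρ) :=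
            mul_le_mul_of_nonneg_left h1 (hP x).le
        _ = 2 ^ ρ * (P x * (Z / P x ^ α) ^ ρ) := by ring
        _ = 2 ^ ρ * (Z ^ ρ * P x ^ α) := by rw [hkey x]
    calc (∑ x, P x * (2 : ℝ) ^ (ρ * (L x : ℝ))) ≤ ∑ x, 2 ^ ρ * (Z ^ ρ * P x ^ α) :=
          Finset.sum_le_sum (fun x _ => hterm x)
      _ = 2 ^ ρ * (Z ^ ρ * ∑ x, P x ^ α) := by rw [← Finset.mul_sum, ← Finset.mul_sum]
      _ = 2 ^ ρ * Z ^ (ρ + 1) := by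
          rw [← hZ, Real.rpow_add hZpos, Real.rpow_one]
  have hcoef : 1 / (1 - α) = (ρ + 1) / ρ := by
    rw [hα]; rw [show (1:ℝ) - 1 / (1+ρ) = ρ / (1+ρ) by field_simp; ring]
    rw [one_div_div]; ring
  have hlogZ : Real.logb 2 (Z ^ (ρ+1)) = (ρ+1) * Real.logb 2 Z :=
    Real.logb_rpow_eq_mul_logb_of_pos hZpos
  refine ⟨kraft, ?_, ?_⟩
  · rw [← hZ, hcoef]
    have h1 : Real.logb 2 (Z ^ (ρ+1)) ≤ Real.logb 2 (∑ x, P x * (2 : ℝ) ^ (ρ * (L x : ℝ))) :=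
      Real.logb_le_logb_of_le (by norm_num) (Real.rpow_pos_of_pos hZpos _) hSlb
    rw [hlogZ] at h1
    have h2 := mul_le_mul_of_nonneg_left h1 (by positivity : (0:ℝ) ≤ 1/ρ)
    calc (ρ+1)/ρ * Real.logb 2 Z = 1/ρ * ((ρ+1) * Real.logb 2 Z) := by ring
      _ ≤ _ := h2
  · rw [← hZ, hcoef]
    have h1 : Real.logb 2 (∑ x, P x * (2 : ℝ) ^ (ρ * (L x : ℝ))) ≤
        Real.logb 2 (2 ^ ρ * Z ^ (ρ+1)) :=
      Real.logb_le_logb_of_le (by norm_num) hSpos hSub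
    have h2 : Real.logb 2 ((2:ℝ) ^ ρ * Z ^ (ρ+1)) = ρ + (ρ+1) * Real.logb 2 Z := by
      rw [Real.logb_mul (Real.rpow_pos_of_pos h2pos _).ne' (Real.rpow_pos_of_pos hZpos _).ne',
        Real.logb_rpow h2pos h2ne1, hlogZ]
    rw [h2] at h1
    have h3 := mul_le_mul_of_nonneg_left h1 (by positivity : (0:ℝ) ≤ 1/ρ)
    calc (1:ℝ)/ρ * Real.logb 2 (∑ x, P x * (2 : ℝ) ^ (ρ * (L x : ℝ)))
        ≤ 1/ρ * (ρ + (ρ+1) * Real.logb 2 Z) := h3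
      _ = (ρ+1)/ρ * Real.logb 2 Z + 1 := by field_simp; ring
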